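/- Let Σ be a positive definite covariance matrix on R^d, S, T ⊆ [d], β supported on S. Define Δ₁ = β_{S\T}^T Σ_{S\T|T} β_{S\T} / σ² and, for any α ∈ R^{|T\S|}, Δ₂(α) = (α_β - α)^T Σ_{T\S | S∩T} (α_β - α)/σ² where α_β = Σ_{T\S|S∩T}^{-1} Σ_{(T\S)(S\T)|S∩T} β_{S\T}. Then for X ~ N(0,Σ), Var[X_{S\T}^T β_{S\T} - X_{T\S}^T α | X_{S∩T}] = σ²(Δ₁ + Δ₂(α)). -/

import Mathlib

open Matrix

lemma posDef_submatrix_of_injective {m n : Type*} [Fintype m] [Fintype n]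
    [DecidableEq m] [DecidableEq n] {M : Matrix m m ℝ} (hM : M.PosDef)
    (f : n → m) (hf : Function.Injective f) : (M.submatrix f f).PosDef := by
  classical
  set E : Matrix m n ℝ := Matrix.of (fun j i => if j = f i then 1 else 0) with hE
  have hsub : M.submatrix f f = Eᴴ * M * E := by
    ext i j
    simp [hE, Matrix.mul_apply, Matrix.conjTranspose_apply, boole_mul, mul_boole,
      Finset.sum_ite_eq, Finset.sum_ite_eq']
  have hEinj : ∀ v : n → ℝ, E *ᵥ v = 0 → v = 0 := by
    intro v hv
    funext i
    have h := congrFun hv (f i)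
    simpa [hE, Matrix.mulVec, dotProduct, boole_mul, hf.eq_iff,
      Finset.sum_ite_eq] using h
  refine Matrix.PosDef.of_dotProduct_mulVec_pos (hM.1.submatrix f) fun x hx => ?_
  rw [hsub]
  have hkey : star x ⬝ᵥ (Eᴴ * M * E) *ᵥ x = star (E *ᵥ x) ⬝ᵥ M *ᵥ (E *ᵥ x) := by
    simp [Matrix.dotProduct_mulVec, Matrix.star_mulVec, Matrix.mulVec_mulVec,
      ← Matrix.vecMul_vecMul, Matrix.vecMul_transpose, Matrix.mul_assoc]
  rw [hkey]
  exact hM.dotProduct_mulVec_pos (fun h => hx (hEinj x h))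

lemma fromBlocks_sub' {n₁ n₂ m₁ m₂ R : Type*} [Sub R]
    (A B : Matrix n₁ m₁ R) (C D : Matrix n₁ m₂ R) (E F : Matrix n₂ m₁ R)
    (G H : Matrix n₂ m₂ R) :
    fromBlocks A C E G - fromBlocks B D F H =
      fromBlocks (A - B) (C - D) (E - F) (G - H) := by
  ext (i | i) (j | j) <;> rfl

theorem stmt6_key {N n₁ n₂ n₃ : Type*} [Fintype N] [Fintype n₁] [Fintype n₂] [Fintype n₃]
    [DecidableEq N] [DecidableEq n₁] [DecidableEq n₂] [DecidableEq n₃]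
    (Sig : Matrix N N ℝ) (hSig : Sig.PosDef) (σ2 : ℝ) (hσ2 : 0 < σ2)
    (β : n₁ → ℝ) (α : n₂ → ℝ) (f₁ : n₁ → N) (f₂ : n₂ → N) (f₃ : n₃ → N)
    (h23 : Function.Injective (Sum.elim f₂ f₃)) :
    Sum.elim β (-α) ⬝ᵥ
      ((Sig.submatrix (Sum.elim f₁ f₂) (Sum.elim f₁ f₂) -
          Sig.submatrix (Sum.elim f₁ f₂) f₃ * (Sig.submatrix f₃ f₃)⁻¹ *
            Sig.submatrix f₃ (Sum.elim f₁ f₂)) *ᵥ Sum.elim β (-α)) =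
    σ2 * ((β ⬝ᵥ ((Sig.submatrix f₁ f₁ -
            Sig.submatrix f₁ (Sum.elim f₂ f₃) *
              (Sig.submatrix (Sum.elim f₂ f₃) (Sum.elim f₂ f₃))⁻¹ *
              Sig.submatrix (Sum.elim f₂ f₃) f₁) *ᵥ β)) / σ2 +
      (((Sig.submatrix f₂ f₂ -
            Sig.submatrix f₂ f₃ * (Sig.submatrix f₃ f₃)⁻¹ * Sig.submatrix f₃ f₂)⁻¹ *ᵥ
            ((Sig.submatrix f₂ f₁ -
              Sig.submatrix f₂ f₃ * (Sig.submatrix f₃ f₃)⁻¹ * Sig.submatrix f₃ f₁) *ᵥ β) - α) ⬝ᵥ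
        ((Sig.submatrix f₂ f₂ -
            Sig.submatrix f₂ f₃ * (Sig.submatrix f₃ f₃)⁻¹ * Sig.submatrix f₃ f₂) *ᵥ
          ((Sig.submatrix f₂ f₂ -
            Sig.submatrix f₂ f₃ * (Sig.submatrix f₃ f₃)⁻¹ * Sig.submatrix f₃ f₂)⁻¹ *ᵥ
            ((Sig.submatrix f₂ f₁ -
              Sig.submatrix f₂ f₃ * (Sig.submatrix f₃ f₃)⁻¹ * Sig.submatrix f₃ f₁) *ᵥ β) - α))) / σ2) := by
  classical
  have hH : Sigᴴ = Sig := hSig.1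
  have hf3 : Function.Injective f₃ := fun a b h => Sum.inr_injective (h23 h)
  set A11 := Sig.submatrix f₁ f₁ with hA11
  set A12 := Sig.submatrix f₁ f₂ with hA12
  set A13 := Sig.submatrix f₁ f₃ with hA13
  set A21 := Sig.submatrix f₂ f₁ with hA21
  set A22 := Sig.submatrix f₂ f₂ with hA22
  set A23 := Sig.submatrix f₂ f₃ with hA23
  set A31 := Sig.submatrix f₃ f₁ with hA31
  set A32 := Sig.submatrix f₃ f₂ with hA32
  set A33 := Sig.submatrix f₃ f₃ with hA33
  have hbTT : Sig.submatrix (Sum.elim f₂ f₃) (Sum.elim f₂ f₃) = fromBlocks A22 A23 A32 A33 := by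
    ext (i | i) (j | j) <;> rfl
  have hbcol : Sig.submatrix f₁ (Sum.elim f₂ f₃) = fromCols A12 A13 := by
    ext i (j | j) <;> rfl
  have hbrow : Sig.submatrix (Sum.elim f₂ f₃) f₁ = fromRows A21 A31 := by
    ext (i | i) j <;> rfl
  have hbAA : Sig.submatrix (Sum.elim f₁ f₂) (Sum.elim f₁ f₂) = fromBlocks A11 A12 A21 A22 := by
    ext (i | i) (j | j) <;> rfl
  have hbA3 : Sig.submatrix (Sum.elim f₁ f₂) f₃ = fromRows A13 A23 := by
    ext (i | i) j <;> rfl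
  have hb3A : Sig.submatrix f₃ (Sum.elim f₁ f₂) = fromCols A31 A32 := by
    ext i (j | j) <;> rfl
  clear_value A11 A12 A13 A21 A22 A23 A31 A32 A33
  have t12 : A12ᴴ = A21 := by rw [hA12, hA21, conjTranspose_submatrix, hH]
  have t13 : A13ᴴ = A31 := by rw [hA13, hA31, conjTranspose_submatrix, hH]
  have t23 : A23ᴴ = A32 := by rw [hA23, hA32, conjTranspose_submatrix, hH]
  have t32 : A32ᴴ = A23 := by rw [← t23, conjTranspose_conjTranspose]
  have t22 : A22ᴴ = A22 := by rw [hA22, conjTranspose_submatrix, hH]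
  have t33 : A33.IsHermitian := by rw [hA33]; exact hSig.1.submatrix f₃
  have pd3 : A33.PosDef := by rw [hA33]; exact posDef_submatrix_of_injective hSig f₃ hf3
  haveI i33 : Invertible A33 :=
    Matrix.invertibleOfIsUnitDet A33 (isUnit_iff_ne_zero.mpr pd3.det_pos.ne')
  have pdTT : (fromBlocks A22 A23 A32 A33).PosDef :=
    hbTT ▸ posDef_submatrix_of_injective hSig _ h23
  haveI iTT : Invertible (fromBlocks A22 A23 A32 A33) :=
    Matrix.invertibleOfIsUnitDet _ (isUnit_iff_ne_zero.mpr pdTT.det_pos.ne')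
  haveI iS0 : Invertible (A22 - A23 * ⅟A33 * A32) :=
    Matrix.invertibleOfFromBlocks₂₂Invertible A22 A23 A32 A33
  have hi3 : ⅟A33 = A33⁻¹ := invOf_eq_nonsing_inv A33
  haveI iS : Invertible (A22 - A23 * A33⁻¹ * A32) := by rw [← hi3]; exact iS0
  set S := A22 - A23 * A33⁻¹ * A32 with hS
  have hSh : S.IsHermitian := by
    show Sᴴ = S
    rw [hS]
    rw [conjTranspose_sub, t22, conjTranspose_mul, conjTranspose_mul,
      conjTranspose_nonsing_inv, t33.eq, t32, t23, Matrix.mul_assoc]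
  set P := A11 - A13 * A33⁻¹ * A31 with hP
  set Q := A12 - A13 * A33⁻¹ * A32 with hQ
  clear_value S P Q
  have hQH : Qᴴ = A21 - A23 * A33⁻¹ * A31 := by
    rw [hQ, conjTranspose_sub, t12, conjTranspose_mul, conjTranspose_mul,
      conjTranspose_nonsing_inv, t33.eq, t32, t13, Matrix.mul_assoc]
  have hTTinv : (Sig.submatrix (Sum.elim f₂ f₃) (Sum.elim f₂ f₃))⁻¹ =
      fromBlocks S⁻¹ (-(S⁻¹ * A23 * A33⁻¹)) (-(A33⁻¹ * A32 * S⁻¹))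
        (A33⁻¹ + A33⁻¹ * A32 * S⁻¹ * A23 * A33⁻¹) := by
    have hSS : A22 - A23 * ⅟A33 * A32 = S := by rw [hi3, ← hS]
    have hIv : ⅟(A22 - A23 * ⅟A33 * A32) = S⁻¹ := by
      rw [invOf_eq_nonsing_inv, hSS]
    rw [hbTT, ← invOf_eq_nonsing_inv (fromBlocks A22 A23 A32 A33),
      Matrix.invOf_fromBlocks₂₂_eq, hIv, hi3]
  have hquot : A11 - Sig.submatrix f₁ (Sum.elim f₂ f₃) *
      (Sig.submatrix (Sum.elim f₂ f₃) (Sum.elim f₂ f₃))⁻¹ *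
      Sig.submatrix (Sum.elim f₂ f₃) f₁ =
      P - Q * S⁻¹ * (A21 - A23 * A33⁻¹ * A31) := by
    rw [hbcol, hbrow, hTTinv, fromCols_mul_fromBlocks, fromCols_mul_fromRows, hP, hQ]
    simp only [Matrix.mul_neg, Matrix.neg_mul, Matrix.add_mul, Matrix.mul_add,
      Matrix.sub_mul, Matrix.mul_sub, Matrix.mul_assoc]
    noncomm_ring
  have hAB : Sig.submatrix (Sum.elim f₁ f₂) (Sum.elim f₁ f₂) -
      Sig.submatrix (Sum.elim f₁ f₂) f₃ * A33⁻¹ * Sig.submatrix f₃ (Sum.elim f₁ f₂) =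
      fromBlocks P Q Qᴴ S := by
    rw [hbAA, hbA3, hb3A, fromRows_mul, fromRows_mul_fromCols, fromBlocks_sub',
      hQH, hP, hQ, hS]
  rw [hAB, Matrix.dotProduct_mulVec]
  have schur := schur_complement_eq₂₂ P Q β (-α) hSh
  rw [show star (Sum.elim β (-α)) = Sum.elim β (-α) from funext fun i => star_trivial _,
     show ∀ v : n₂ → ℝ, star v = v from fun v => funext fun i => star_trivial _,
     show star β = β from funext fun i => star_trivial _] at schur
  rw [schur, mul_add, mul_div_cancel₀ _ (ne_of_gt hσ2), mul_div_cancel₀ _ (ne_of_gt hσ2),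
    hquot, hQH]
  rw [← Matrix.mulVec_mulVec, ← sub_eq_add_neg]
  simp only [Matrix.dotProduct_mulVec]
  exact add_comm _ _

/-- Conditional-variance decomposition for Gaussian linear
combinations.  The index set is partitioned into three parts: `n₁ ~ S\T`,
`n₂ ~ T\S`, `n₃ ~ S∩T`; `Sig` is the (positive definite) joint covariance.
Using the Gaussian formula `Var[vᵀX_A | X_B] = vᵀ Σ_{A|B} v` (with
`Σ_{A|B} = Σ_{AA} - Σ_{AB}Σ_{BB}⁻¹Σ_{BA}`), the conditional variance of
`X_{S\T}ᵀβ - X_{T\S}ᵀα` given `X_{S∩T}` equals `σ²(Δ₁ + Δ₂(α))` where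
`Δ₁ = βᵀ Σ_{S\T|T} β/σ²` and
`Δ₂(α) = (α_β - α)ᵀ Σ_{T\S|S∩T} (α_β - α)/σ²`,
`α_β = Σ_{T\S|S∩T}⁻¹ Σ_{(T\S)(S\T)|S∩T} β`. -/
theorem stmt_6 {n₁ n₂ n₃ : Type*} [Fintype n₁] [Fintype n₂] [Fintype n₃]
    [DecidableEq n₁] [DecidableEq n₂] [DecidableEq n₃]
    (Sig : Matrix ((n₁ ⊕ n₂) ⊕ n₃) ((n₁ ⊕ n₂) ⊕ n₃) ℝ) (hSig : Sig.PosDef)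
    (σ2 : ℝ) (hσ2 : 0 < σ2) (β : n₁ → ℝ) (α : n₂ → ℝ) :
    -- embeddings of the three blocks into the full index set
    let e₁ : n₁ → (n₁ ⊕ n₂) ⊕ n₃ := fun i => Sum.inl (Sum.inl i)
    let e₂ : n₂ → (n₁ ⊕ n₂) ⊕ n₃ := fun i => Sum.inl (Sum.inr i)
    let e₃ : n₃ → (n₁ ⊕ n₂) ⊕ n₃ := fun i => Sum.inr i
    -- T = (T\S) ∪ (S∩T)
    let eT : n₂ ⊕ n₃ → (n₁ ⊕ n₂) ⊕ n₃ := Sum.elim e₂ e₃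
    -- Σ_{S\T | T}
    let Sig1T : Matrix n₁ n₁ ℝ :=
      Sig.submatrix e₁ e₁ -
        Sig.submatrix e₁ eT * (Sig.submatrix eT eT)⁻¹ * Sig.submatrix eT e₁
    -- Σ_{T\S | S∩T}
    let Sig23 : Matrix n₂ n₂ ℝ :=
      Sig.submatrix e₂ e₂ -
        Sig.submatrix e₂ e₃ * (Sig.submatrix e₃ e₃)⁻¹ * Sig.submatrix e₃ e₂
    -- Σ_{(T\S)(S\T) | S∩T}
    let Sig213 : Matrix n₂ n₁ ℝ :=
      Sig.submatrix e₂ e₁ -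
        Sig.submatrix e₂ e₃ * (Sig.submatrix e₃ e₃)⁻¹ * Sig.submatrix e₃ e₁
    let αβ : n₂ → ℝ := Sig23⁻¹ *ᵥ (Sig213 *ᵥ β)
    let Δ₁ : ℝ := (β ⬝ᵥ (Sig1T *ᵥ β)) / σ2
    let Δ₂ : ℝ := ((αβ - α) ⬝ᵥ (Sig23 *ᵥ (αβ - α))) / σ2
    -- A = (S\T) ∪ (T\S), conditioned on B = S∩T
    let eA : n₁ ⊕ n₂ → (n₁ ⊕ n₂) ⊕ n₃ := Sum.elim e₁ e₂
    let SigAB : Matrix (n₁ ⊕ n₂) (n₁ ⊕ n₂) ℝ :=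
      Sig.submatrix eA eA -
        Sig.submatrix eA e₃ * (Sig.submatrix e₃ e₃)⁻¹ * Sig.submatrix e₃ eA
    let w : n₁ ⊕ n₂ → ℝ := Sum.elim β (-α)
    -- Var[X_{S\T}ᵀβ - X_{T\S}ᵀα | X_{S∩T}] = σ²(Δ₁ + Δ₂(α))
    w ⬝ᵥ (SigAB *ᵥ w) = σ2 * (Δ₁ + Δ₂) := by
  intro e₁ e₂ e₃ eT Sig1T Sig23 Sig213 αβ Δ₁ Δ₂ eA SigAB w
  have h23 : Function.Injective
      (Sum.elim (fun i => (Sum.inl (Sum.inr i) : (n₁ ⊕ n₂) ⊕ n₃))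
        (fun i => (Sum.inr i : (n₁ ⊕ n₂) ⊕ n₃))) := by
    rintro (a | a) (b | b) h <;> simp_all
  exact stmt6_key Sig hSig σ2 hσ2 β α _ _ _ h23
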